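/- Let $N$ be a positive integer and $n$ an exact divisor of $N$. Define $W_n$ to be the set of real matrices $\frac{1}{\sqrt{n}}\begin{pmatrix} an & b \\ cN & dn \end{pmatrix}$ with $a, b, c, d \in \mathbb{Z}$ and $adn^2 - bcN = n$. Then for exact divisors $n, n'$ of $N$, the product of any element of $W_n$ with any element of $W_{n'}$ lies in $W_{n*n'}$, where $n * n' = nn'/\gcd(n,n')^2$. -/

import Mathlib

/-- The Atkin–Lehner coset `W_n` attached to an exact divisor `n` of `N`. -/
def Wset (N n : ℕ) : Set (Matrix (Fin 2) (Fin 2) ℝ) :=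
  {M | ∃ a b c d : ℤ, a * d * (n : ℤ) ^ 2 - b * c * (N : ℤ) = n ∧
    M = !![(a : ℝ) * n / Real.sqrt n, (b : ℝ) / Real.sqrt n;
           (c : ℝ) * N / Real.sqrt n, (d : ℝ) * n / Real.sqrt n]}

/-- For exact divisors `n, n'` of `N`, the product of an element of `W_n` and an
element of `W_{n'}` lies in `W_{n*n'}` where `n * n' = n n' / gcd(n,n')²`. -/
theorem Wset_mul_mem (N n n' : ℕ) (hN : 0 < N)
    (hn : 0 < n) (hnd : n ∣ N) (hng : Nat.gcd n (N / n) = 1)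
    (hn' : 0 < n') (hnd' : n' ∣ N) (hng' : Nat.gcd n' (N / n') = 1) :
    ∀ M ∈ Wset N n, ∀ M' ∈ Wset N n', M * M' ∈ Wset N (n * n' / Nat.gcd n n' ^ 2) := by
  intro M hM M' hM'
  obtain ⟨a, b, c, d, hdet, rfl⟩ := hM
  obtain ⟨a', b', c', d', hdet', rfl⟩ := hM'
  set g := Nat.gcd n n' with hg
  have hg0 : 0 < g := Nat.gcd_pos_of_pos_left _ hn
  obtain ⟨u, hu⟩ := Nat.gcd_dvd_left n n'
  obtain ⟨v, hv⟩ := Nat.gcd_dvd_right n n'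
  obtain ⟨k, hk⟩ := Nat.lcm_dvd hnd hnd'
  rw [← hg] at hu hv
  clear_value g
  have hu0 : 0 < u := by
    rcases Nat.eq_zero_or_pos u with h | h
    · subst h; simp at hu; omega
    · exact h
  have hv0 : 0 < v := by
    rcases Nat.eq_zero_or_pos v with h | h
    · subst h; simp at hv; omega
    · exact h
  have hlcm : Nat.lcm n n' = g * u * v := by
    have hgl : g * Nat.lcm n n' = n * n' := by rw [hg]; exact Nat.gcd_mul_lcm n n'
    have h1 : g * Nat.lcm n n' = g * (g * u * v) := by
      rw [hgl, hu, hv]; ring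
    exact Nat.eq_of_mul_eq_mul_left hg0 h1
  have hm : n * n' / g ^ 2 = u * v := by
    apply Nat.div_eq_of_eq_mul_left (by positivity)
    rw [hu, hv]; ring
  rw [hm]
  have hnZ : (n : ℤ) = g * u := by exact_mod_cast hu
  have hnZ' : (n' : ℤ) = g * v := by exact_mod_cast hv
  have hNZ : (N : ℤ) = g * u * v * k := by
    rw [hk, hlcm]; push_cast; ring
  rw [hnZ, hNZ] at hdet
  rw [hnZ', hNZ] at hdet'
  have hguZ : ((g : ℤ) * u) ≠ 0 := by
    have : (0:ℤ) < (g:ℤ) * u := by exact_mod_cast Nat.mul_pos hg0 hu0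
    exact this.ne'
  have hgvZ : ((g : ℤ) * v) ≠ 0 := by
    have : (0:ℤ) < (g:ℤ) * v := by exact_mod_cast Nat.mul_pos hg0 hv0
    exact this.ne'
  have h1 : a * d * (g:ℤ) * u - b * c * ((v:ℤ) * k) = 1 := by
    apply mul_left_cancel₀ hguZ
    linear_combination hdet
  have h2 : a' * d' * (g:ℤ) * v - b' * c' * ((u:ℤ) * k) = 1 := by
    apply mul_left_cancel₀ hgvZ
    linear_combination hdet'
  have h12 : (a * d * (g:ℤ) * u - b * c * ((v:ℤ) * k)) *
      (a' * d' * (g:ℤ) * v - b' * c' * ((u:ℤ) * k)) = 1 := by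
    rw [h1, h2]; norm_num
  refine ⟨a * a' * g + b * c' * k, a * b' * u + b * d' * v,
    c * a' * v + d * c' * u, c * b' * k + d * d' * g, ?_, ?_⟩
  · rw [hNZ]; push_cast
    linear_combination ((u:ℤ) * v) * h12
  · -- matrix equality
    have rn : (n : ℝ) = g * u := by exact_mod_cast hu
    have rn' : (n' : ℝ) = g * v := by exact_mod_cast hv
    have rN : (N : ℝ) = g * u * v * k := by
      rw [hk, hlcm]; push_cast; ring
    have hsm : Real.sqrt ((u:ℝ) * v) ≠ 0 := by
      have : (0:ℝ) < (u:ℝ) * v := by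
        have := Nat.mul_pos hu0 hv0; exact_mod_cast this
      exact (Real.sqrt_pos.mpr this).ne'
    have hsn : Real.sqrt (n:ℝ) ≠ 0 := by
      have : (0:ℝ) < (n:ℝ) := by exact_mod_cast hn
      exact (Real.sqrt_pos.mpr this).ne'
    have hsn' : Real.sqrt (n':ℝ) ≠ 0 := by
      have : (0:ℝ) < (n':ℝ) := by exact_mod_cast hn'
      exact (Real.sqrt_pos.mpr this).ne'
    have hs : Real.sqrt (n:ℝ) * Real.sqrt (n':ℝ) = g * (Real.sqrt (u:ℝ) * Real.sqrt (v:ℝ)) := by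
      rw [← Real.sqrt_mul (by positivity), ← Real.sqrt_mul (by positivity)]
      rw [show ((n:ℝ) * (n':ℝ)) = (g:ℝ)^2 * ((u:ℝ) * v) by rw [rn, rn']; ring]
      rw [Real.sqrt_mul (by positivity), Real.sqrt_sq (by positivity)]
    rw [rn, rn'] at hs
    have hsq : Real.sqrt ((u:ℝ) * v) = Real.sqrt u * Real.sqrt v := Real.sqrt_mul (Nat.cast_nonneg _) _
    have hsq' : Real.sqrt ((v:ℝ) * u) = Real.sqrt u * Real.sqrt v := by rw [mul_comm]; exact hsq
    ext i j
    fin_cases i <;> fin_cases j <;>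
      simp only [Matrix.mul_apply, Matrix.of_apply, Fin.sum_univ_two, Matrix.cons_val', Matrix.cons_val_zero,
        Matrix.cons_val_one, Matrix.head_cons, Matrix.head_fin_const, Matrix.empty_val',
        Matrix.cons_val_fin_one, Fin.isValue, Fin.mk_zero, Fin.mk_one, Matrix.cons_val_one,
        Matrix.head_cons] <;>
      push_cast <;>
      field_simp <;>
      simp only [rn, rn', rN]
    · linear_combination ((a:ℝ) * g^2 * u * a' * v + g * u * v * b * c' * k) * hsq + (-((a:ℝ) * g * u * a' * v + u * v * b * c' * k)) * hs
    · linear_combination ((a:ℝ) * g * u * b' + g * b * d' * v) * hsq + (-((a:ℝ) * u * b' + b * d' * v)) * hs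
    · linear_combination (-((c:ℝ) * a' * v + d * u * c')) * hs + ((g:ℝ) * (c * a' * v + d * u * c')) * hsq'
    · linear_combination ((c:ℝ) * g * u * v * k * b' + g^2 * u * v * d * d') * hsq + (-((c:ℝ) * u * v * k * b' + g * u * v * d * d')) * hs
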